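/- Let V and W be finite-dimensional vector spaces over an algebraically closed field with dim V = r+1 ≤ dim W = m. The set Z of tensors in V ⊗ W of rank at most r (i.e., not of maximal rank r+1) is a Zariski-closed subset of codimension m - r. Consequently, for any linear subspace X ⊆ V ⊗ W, the codimension of X ∩ Z in X is at most m - r; in particular, if dim X > m - r then X contains a nonzero tensor of non-maximal rank. -/

import Mathlib

open Module

open MvPolynomial Module

namespace Stmt8Aux

noncomputable section

variable (K : Type*) [Field K] (D n : ℕ)

/-- variable index type: `x`-variables and `y`-variables -/
abbrev σt (D n : ℕ) := Sum (Fin D) (Fin n)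

/-- bidegree weight -/
def ww : σt D n → ℕ × ℕ := Sum.elim (fun _ => (1,0)) (fun _ => (0,1))

/-- the submodule of bihomogeneous polynomials of bidegree `u` -/
def Vw (u : ℕ × ℕ) : Submodule K (MvPolynomial (σt D n) K) :=
  weightedHomogeneousSubmodule K (ww D n) u

lemma weight_fst (w : σt D n → ℕ × ℕ) (d : σt D n →₀ ℕ) :
    (Finsupp.weight w d).1 = Finsupp.weight (fun i => (w i).1) d := by
  classical
  simp only [Finsupp.weight_apply, Finsupp.sum]
  rw [Prod.fst_sum]
  apply Finset.sum_congr rfl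
  intro i _
  simp [Prod.smul_fst]

lemma weight_snd (w : σt D n → ℕ × ℕ) (d : σt D n →₀ ℕ) :
    (Finsupp.weight w d).2 = Finsupp.weight (fun i => (w i).2) d := by
  classical
  simp only [Finsupp.weight_apply, Finsupp.sum]
  rw [Prod.snd_sum]
  apply Finset.sum_congr rfl
  intro i _
  simp [Prod.smul_snd]

lemma exponents_finite (u : ℕ × ℕ) :
    {d : σt D n →₀ ℕ | Finsupp.weight (ww D n) d = u}.Finite := by
  classical
  apply Set.Finite.subset (Set.finite_Icc (0 : σt D n →₀ ℕ)
    (Finsupp.equivFunOnFinite.symm (fun _ => u.1 + u.2)))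
  intro d hd
  simp only [Set.mem_setOf_eq] at hd
  refine ⟨zero_le, ?_⟩
  rw [Finsupp.le_iff]
  intro i _
  have h1 : (Finsupp.weight (ww D n) d).1 = Finsupp.weight (fun i => ((ww D n) i).1) d :=
    weight_fst D n _ d
  have h2 : (Finsupp.weight (ww D n) d).2 = Finsupp.weight (fun i => ((ww D n) i).2) d :=
    weight_snd D n _ d
  have key : d i ≤ u.1 + u.2 := by
    cases i with
    | inl a =>
      have : d (Sum.inl a) ≤ Finsupp.weight (fun i => ((ww D n) i).1) d :=
        Finsupp.le_weight _ (by simp [ww]) d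
      rw [← h1, hd] at this
      omega
    | inr b =>
      have : d (Sum.inr b) ≤ Finsupp.weight (fun i => ((ww D n) i).2) d :=
        Finsupp.le_weight _ (by simp [ww]) d
      rw [← h2, hd] at this
      omega
  simpa using key

lemma Vw_le_span (u : ℕ × ℕ) :
    Vw K D n u ≤ Submodule.span K
      ((fun d => (monomial d (1:K) : MvPolynomial (σt D n) K)) ''
        {d | Finsupp.weight (ww D n) d = u}) := by
  intro p hp
  have hrep := MvPolynomial.support_sum_monomial_coeff p
  rw [← hrep]
  apply Submodule.sum_mem
  intro d hd
  have hw : Finsupp.weight (ww D n) d = u := hp (MvPolynomial.mem_support_iff.mp hd)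
  have : (monomial d (coeff d p) : MvPolynomial (σt D n) K)
      = (coeff d p) • monomial d (1:K) := by
    rw [MvPolynomial.smul_monomial, smul_eq_mul, mul_one]
  rw [this]
  exact Submodule.smul_mem _ _ (Submodule.subset_span ⟨d, hw, rfl⟩)

instance Vw_fd (u : ℕ × ℕ) : FiniteDimensional K (Vw K D n u) := by
  have hfin := (exponents_finite D n u).image
      (fun d => (monomial d (1:K) : MvPolynomial (σt D n) K))
  have := FiniteDimensional.span_of_finite K hfin
  exact Submodule.finiteDimensional_of_le (Vw_le_span K D n u)

end

noncomputable section Count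



variable {K : Type*} [Field K] {D n : ℕ} (hD : 1 ≤ D) (hn : 1 ≤ n) (k : ℕ)

/-- index type for the independent monomial family -/
abbrev Gt (D n k : ℕ) := (Fin (D-1) → Fin (k/D + 1)) × (Fin (n-1) → Fin (k/n + 1))

def S1 (g : Gt D n k) : ℕ := ∑ j : Fin (D-1), (g.1 j : ℕ)
def S2 (g : Gt D n k) : ℕ := ∑ j : Fin (n-1), (g.2 j : ℕ)

def F1 (g : Gt D n k) (v : ℕ) : ℕ :=
  if h : v < D-1 then (g.1 ⟨v, h⟩ : ℕ) else k - S1 k g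
def F2 (g : Gt D n k) (v : ℕ) : ℕ :=
  if h : v < n-1 then (g.2 ⟨v, h⟩ : ℕ) else k - S2 k g

lemma S1_le (g : Gt D n k) : S1 k g ≤ k := by
  have h1 : S1 k g ≤ (D-1) * (k/D) := by
    have := Finset.sum_le_card_nsmul (Finset.univ : Finset (Fin (D-1)))
      (fun j => (g.1 j : ℕ)) (k/D) (fun j _ => Nat.lt_succ_iff.mp (g.1 j).isLt)
    simpa [smul_eq_mul, S1] using this
  have h2 : D * (k/D) ≤ k := by
    rw [Nat.mul_comm]; exact Nat.div_mul_le_self k D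
  have h3 : (D-1) * (k/D) ≤ D * (k/D) := Nat.mul_le_mul_right _ (by omega)
  exact le_trans h1 (le_trans h3 h2)

lemma S2_le (g : Gt D n k) : S2 k g ≤ k := by
  have h1 : S2 k g ≤ (n-1) * (k/n) := by
    have := Finset.sum_le_card_nsmul (Finset.univ : Finset (Fin (n-1)))
      (fun j => (g.2 j : ℕ)) (k/n) (fun j _ => Nat.lt_succ_iff.mp (g.2 j).isLt)
    simpa [smul_eq_mul, S2] using this
  have h2 : n * (k/n) ≤ k := by
    rw [Nat.mul_comm]; exact Nat.div_mul_le_self k n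
  have h3 : (n-1) * (k/n) ≤ n * (k/n) := Nat.mul_le_mul_right _ (by omega)
  exact le_trans h1 (le_trans h3 h2)

include hD in
lemma sumF1 (g : Gt D n k) : ∑ a : Fin D, F1 k g (a : ℕ) = k := by
  have hsum : ∑ a : Fin D, F1 k g (a : ℕ) = ∑ v ∈ Finset.range D, F1 k g v :=
    Fin.sum_univ_eq_sum_range _ D
  have hins : Finset.range D = insert (D-1) (Finset.range (D-1)) := by
    conv_lhs => rw [show D = (D-1)+1 by omega]
    exact Finset.range_add_one
  rw [hsum, hins, Finset.sum_insert (by simp)]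
  have hlast : F1 k g (D-1) = k - S1 k g := by
    simp [F1]
  have hinit : ∑ v ∈ Finset.range (D-1), F1 k g v = S1 k g := by
    rw [← Fin.sum_univ_eq_sum_range (fun v => F1 k g v) (D-1)]
    apply Finset.sum_congr rfl
    intro j _
    simp only [F1, dif_pos j.isLt, Fin.eta]
  rw [hlast, hinit]
  have := S1_le (D := D) (n := n) k g
  omega

include hn in
lemma sumF2 (g : Gt D n k) : ∑ b : Fin n, F2 k g (b : ℕ) = k := by
  have hsum : ∑ b : Fin n, F2 k g (b : ℕ) = ∑ v ∈ Finset.range n, F2 k g v :=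
    Fin.sum_univ_eq_sum_range _ n
  have hins : Finset.range n = insert (n-1) (Finset.range (n-1)) := by
    conv_lhs => rw [show n = (n-1)+1 by omega]
    exact Finset.range_add_one
  rw [hsum, hins, Finset.sum_insert (by simp)]
  have hlast : F2 k g (n-1) = k - S2 k g := by
    simp [F2]
  have hinit : ∑ v ∈ Finset.range (n-1), F2 k g v = S2 k g := by
    rw [← Fin.sum_univ_eq_sum_range (fun v => F2 k g v) (n-1)]
    apply Finset.sum_congr rfl
    intro j _
    simp only [F2, dif_pos j.isLt, Fin.eta]
  rw [hlast, hinit]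
  have := S2_le (D := D) (n := n) k g
  omega

/-- the exponent finsupp attached to an index -/
def expo (g : Gt D n k) : σt D n →₀ ℕ :=
  Finsupp.equivFunOnFinite.symm (Sum.elim (fun a : Fin D => F1 k g (a : ℕ))
    (fun b : Fin n => F2 k g (b : ℕ)))

lemma expo_apply_inl (g : Gt D n k) (a : Fin D) : expo k g (Sum.inl a) = F1 k g (a : ℕ) := rfl
lemma expo_apply_inr (g : Gt D n k) (b : Fin n) : expo k g (Sum.inr b) = F2 k g (b : ℕ) := rfl

include hD hn in
lemma weight_expo (g : Gt D n k) :
    Finsupp.weight (ww D n) (expo k g) = (k, k) := by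
  classical
  have hfst := weight_fst D n (ww D n) (expo k g)
  have hsnd := weight_snd D n (ww D n) (expo k g)
  have hw1 : Finsupp.weight (fun i => ((ww D n) i).1) (expo k g) = k := by
    rw [Finsupp.weight_apply, Finsupp.sum_fintype _ _ (fun i => by simp)]
    rw [Fintype.sum_sum_type]
    have h1 : ∀ a : Fin D, expo k g (Sum.inl a) • ((ww D n) (Sum.inl a)).1
        = F1 k g (a : ℕ) := by intro a; simp [expo_apply_inl, ww]
    have h2 : ∀ b : Fin n, expo k g (Sum.inr b) • ((ww D n) (Sum.inr b)).1 = 0 := by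
      intro b; simp [ww]
    rw [Finset.sum_congr rfl (fun a _ => h1 a), Finset.sum_congr rfl (fun b _ => h2 b)]
    simp [sumF1 hD k g]
  have hw2 : Finsupp.weight (fun i => ((ww D n) i).2) (expo k g) = k := by
    rw [Finsupp.weight_apply, Finsupp.sum_fintype _ _ (fun i => by simp)]
    rw [Fintype.sum_sum_type]
    have h1 : ∀ a : Fin D, expo k g (Sum.inl a) • ((ww D n) (Sum.inl a)).2 = 0 := by
      intro a; simp [ww]
    have h2 : ∀ b : Fin n, expo k g (Sum.inr b) • ((ww D n) (Sum.inr b)).2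
        = F2 k g (b : ℕ) := by intro b; simp [expo_apply_inr, ww]
    rw [Finset.sum_congr rfl (fun a _ => h1 a), Finset.sum_congr rfl (fun b _ => h2 b)]
    simp [sumF2 hn k g]
  ext
  · rw [hfst, hw1]
  · rw [hsnd, hw2]

lemma expo_injective : Function.Injective (expo (D := D) (n := n) k) := by
  intro g g' h
  have h2 : ∀ i, expo k g i = expo k g' i := fun i => by rw [h]
  refine Prod.ext (funext fun j => ?_) (funext fun j => ?_)
  · have hj : (j : ℕ) < D - 1 := j.isLt
    have := h2 (Sum.inl ⟨(j:ℕ), by omega⟩)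
    rw [expo_apply_inl, expo_apply_inl] at this
    simp only [F1, dif_pos hj] at this
    ext
    simpa [Fin.eta] using this
  · have hj : (j : ℕ) < n - 1 := j.isLt
    have := h2 (Sum.inr ⟨(j:ℕ), by omega⟩)
    rw [expo_apply_inr, expo_apply_inr] at this
    simp only [F2, dif_pos hj] at this
    ext
    simpa [Fin.eta] using this

include hD hn in
lemma dv_lower (K : Type*) [Field K] :
    (k/D + 1)^(D-1) * (k/n + 1)^(n-1) ≤ finrank K (Vw K D n (k, k)) := by
  classical
  have hmem : ∀ g : Gt D n k,
      (monomial (expo k g) (1:K) : MvPolynomial (σt D n) K) ∈ Vw K D n (k,k) := by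
    intro g
    exact isWeightedHomogeneous_monomial _ _ _ (weight_expo hD hn k g)
  set fam : Gt D n k → (Vw K D n (k,k)) :=
    fun g => ⟨monomial (expo k g) (1:K), hmem g⟩ with hfam
  have hli : LinearIndependent K fam := by
    apply LinearIndependent.of_comp (Vw K D n (k,k)).subtype
    have : ((Vw K D n (k,k)).subtype ∘ fam)
        = (fun d => (monomial d (1:K) : MvPolynomial (σt D n) K)) ∘ (expo k) := by
      funext g; rfl
    rw [this]
    have hbasis := (MvPolynomial.basisMonomials (σt D n) K).linearIndependent
    have hcoe : (fun d => (monomial d (1:K) : MvPolynomial (σt D n) K))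
        = ⇑(MvPolynomial.basisMonomials (σt D n) K) := by
      rw [MvPolynomial.coe_basisMonomials]
    rw [hcoe]
    exact hbasis.comp _ (expo_injective k)
  have hcard := hli.fintype_card_le_finrank
  have : Fintype.card (Gt D n k) = (k/D + 1)^(D-1) * (k/n + 1)^(n-1) := by
    simp [Gt, Fintype.card_prod, Fintype.card_fun]
  omega

end Count

noncomputable section WChain

open Finset

variable {K : Type*} [Field K] {D n : ℕ}

lemma mulV_le (p : MvPolynomial (σt D n) K) {u : ℕ × ℕ}
    (hp : p.IsWeightedHomogeneous (ww D n) u) (v : ℕ × ℕ) :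
    Submodule.map (LinearMap.mulLeft K p) (Vw K D n v) ≤ Vw K D n (u + v) := by
  rintro _ ⟨z, hz, rfl⟩
  exact hp.mul hz

/-- degree-`(k,k)` part of the ideal generated by `q 0, ..., q (i-1)` -/
def Wmod (q : ℕ → MvPolynomial (σt D n) K) (i k : ℕ) : Submodule K (MvPolynomial (σt D n) K) :=
  if k = 0 then ⊥ else
    (Finset.range i).sup (fun c => Submodule.map (LinearMap.mulLeft K (q c)) (Vw K D n (k-1,k-1)))

variable (q : ℕ → MvPolynomial (σt D n) K) (hq : ∀ c, q c ∈ Vw K D n (1,1))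

include hq in
lemma Wmod_le (i k : ℕ) : Wmod q i k ≤ Vw K D n (k,k) := by
  unfold Wmod
  split_ifs with h
  · exact bot_le
  · apply Finset.sup_le
    intro c _
    have := mulV_le (q c) (hq c) ((k-1,k-1) : ℕ × ℕ)
    rwa [show ((1,1) : ℕ × ℕ) + (k-1,k-1) = (k,k) by
      have : 1 ≤ k := by omega
      ext <;> simp <;> omega] at this

include hq in
lemma Wmod_fd (i k : ℕ) : FiniteDimensional K (Wmod q i k) :=
  Submodule.finiteDimensional_of_le (Wmod_le q hq i k)

/-- dimension of the degree-(k,k) ideal piece -/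
def hF (i k : ℕ) : ℕ := finrank K (Wmod q i k)

/-- dimension of the space of bihomogeneous polys of bidegree (k,k) -/
def dvF (K : Type*) [Field K] (D n k : ℕ) : ℕ := finrank K (Vw K D n (k,k))

include hq in
lemma hF_le_dv (i k : ℕ) : hF q i k ≤ dvF K D n k := by
  haveI := Wmod_fd q hq i k
  exact Submodule.finrank_mono (Wmod_le q hq i k)

omit hq in
lemma Wmod_zero (k : ℕ) : Wmod q 0 k = ⊥ := by
  unfold Wmod
  split_ifs
  · rfl
  · simp

include hq in
lemma master (i k : ℕ) :
    hF q (i+1) (k+1) + hF q i k ≤ hF q i (k+1) + dvF K D n k := by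
  classical
  haveI := Wmod_fd q hq i k
  haveI := Wmod_fd q hq i (k+1)
  haveI := Wmod_fd q hq (i+1) (k+1)
  set M := Submodule.map (LinearMap.mulLeft K (q i)) (Vw K D n (k,k)) with hM
  have hWsplit : Wmod q (i+1) (k+1) = Wmod q i (k+1) ⊔ M := by
    unfold Wmod
    rw [if_neg (by omega), if_neg (by omega), Finset.range_add_one, Finset.sup_insert]
    rw [sup_comm]
    norm_num
    rfl
  have hMfd : FiniteDimensional K M := by
    apply Submodule.finiteDimensional_of_le (mulV_le (q i) (hq i) ((k,k) : ℕ × ℕ))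
  by_cases hqi : q i = 0
  · have : M = ⊥ := by rw [hM, hqi, LinearMap.mulLeft_zero_eq_zero, Submodule.map_zero]
    have h2 := hF_le_dv q hq i k
    unfold hF at *
    rw [hWsplit, this, sup_bot_eq]
    omega
  · have hsupinf := Submodule.finrank_sup_add_finrank_inf_eq (Wmod q i (k+1)) M
    have hMle : finrank K M ≤ dvF K D n k := Submodule.finrank_map_le _ _
    have hinj : Function.Injective (LinearMap.mulLeft K (q i)) := by
      intro a b hab
      simp only [LinearMap.mulLeft_apply] at hab
      exact mul_left_cancel₀ hqi hab
    have hkey : Submodule.map (LinearMap.mulLeft K (q i)) (Wmod q i k)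
        ≤ Wmod q i (k+1) ⊓ M := by
      apply le_inf
      · by_cases hk : k = 0
        · rw [hk, show Wmod q i 0 = ⊥ by unfold Wmod; rw [if_pos rfl], Submodule.map_bot]
          exact bot_le
        · conv_lhs => rw [show Wmod q i k =
            (Finset.range i).sup (fun c => Submodule.map (LinearMap.mulLeft K (q c))
              (Vw K D n (k-1,k-1))) by unfold Wmod; rw [if_neg hk]]
          rw [Finset.sup_eq_iSup, Submodule.map_iSup]
          apply iSup_le
          intro c
          rw [Submodule.map_iSup]
          apply iSup_le
          intro hc
          have step1 : Submodule.map (LinearMap.mulLeft K (q i))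
              (Submodule.map (LinearMap.mulLeft K (q c)) (Vw K D n (k-1,k-1)))
              = Submodule.map (LinearMap.mulLeft K (q c))
                (Submodule.map (LinearMap.mulLeft K (q i)) (Vw K D n (k-1,k-1))) := by
            rw [← Submodule.map_comp, ← Submodule.map_comp,
              ← LinearMap.mulLeft_mul, ← LinearMap.mulLeft_mul, mul_comm]
          rw [step1]
          have step2 : Submodule.map (LinearMap.mulLeft K (q i)) (Vw K D n (k-1,k-1))
              ≤ Vw K D n (k,k) := by
            have := mulV_le (q i) (hq i) ((k-1,k-1) : ℕ × ℕ)
            rwa [show ((1,1) : ℕ × ℕ) + (k-1,k-1) = (k,k) by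
              ext <;> simp <;> omega] at this
          have step3 : Submodule.map (LinearMap.mulLeft K (q c))
              (Submodule.map (LinearMap.mulLeft K (q i)) (Vw K D n (k-1,k-1)))
              ≤ Submodule.map (LinearMap.mulLeft K (q c)) (Vw K D n (k+1-1,k+1-1)) := by
            apply Submodule.map_mono
            simpa using step2
          refine le_trans step3 ?_
          rw [show Wmod q i (k+1) = (Finset.range i).sup
            (fun c => Submodule.map (LinearMap.mulLeft K (q c)) (Vw K D n (k+1-1,k+1-1)))
            by unfold Wmod; rw [if_neg (by omega)]]
          exact Finset.le_sup (f := fun c => Submodule.map (LinearMap.mulLeft K (q c))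
            (Vw K D n (k+1-1,k+1-1))) hc
      · exact Submodule.map_mono (Wmod_le q hq i k)
    have heq : finrank K (Submodule.map (LinearMap.mulLeft K (q i)) (Wmod q i k))
        = hF q i k :=
      (LinearEquiv.finrank_eq (Submodule.equivMapOfInjective _ hinj (Wmod q i k))).symm
    have hinffd : FiniteDimensional K (Wmod q i (k+1) ⊓ M : Submodule K _) :=
      Submodule.finiteDimensional_of_le inf_le_right
    have hle2 : hF q i k ≤ finrank K (Wmod q i (k+1) ⊓ M : Submodule K _) := by
      rw [← heq]
      exact Submodule.finrank_mono hkey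
    have hWeq : hF q (i+1) (k+1) = finrank K (Wmod q i (k+1) ⊔ M : Submodule K _) := by
      unfold hF
      rw [hWsplit]
    unfold hF at *
    omega

end WChain

noncomputable section Endgame

variable {K : Type*} [Field K] {D n : ℕ}

/-- weight coordinates: the bidegree is (sum of x-exponents, sum of y-exponents) -/
lemma weight_coords (d : σt D n →₀ ℕ) :
    Finsupp.weight (ww D n) d
      = (∑ a : Fin D, d (Sum.inl a), ∑ b : Fin n, d (Sum.inr b)) := by
  classical
  ext
  · rw [weight_fst D n (ww D n) d, Finsupp.weight_apply,
      Finsupp.sum_fintype _ _ (fun i => by simp), Fintype.sum_sum_type]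
    simp [ww]
  · rw [weight_snd D n (ww D n) d, Finsupp.weight_apply,
      Finsupp.sum_fintype _ _ (fun i => by simp), Fintype.sum_sum_type]
    simp [ww]

lemma component_mul (p : MvPolynomial (σt D n) K)
    (hp : p.IsWeightedHomogeneous (ww D n) (1,1)) (g : MvPolynomial (σt D n) K) (a b : ℕ) :
    weightedHomogeneousComponent (ww D n) (a+1,b+1) (p * g)
      = p * weightedHomogeneousComponent (ww D n) (a,b) g := by
  classical
  induction g using MvPolynomial.induction_on' with
  | add p1 p2 ih1 ih2 => rw [mul_add, map_add, map_add, mul_add, ih1, ih2]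
  | monomial u r =>
    have hmono : (monomial u r : MvPolynomial (σt D n) K).IsWeightedHomogeneous
        (ww D n) (Finsupp.weight (ww D n) u) := isWeightedHomogeneous_monomial _ _ _ rfl
    by_cases hu : Finsupp.weight (ww D n) u = ((a,b) : ℕ × ℕ)
    · have hmono' : IsWeightedHomogeneous (ww D n) (monomial u r : MvPolynomial (σt D n) K)
          ((a,b) : ℕ × ℕ) := hu ▸ hmono
      have hprod : (p * monomial u r).IsWeightedHomogeneous (ww D n) ((a+1,b+1) : ℕ × ℕ) := by
        have h3 := hp.mul hmono'
        rwa [show ((1,1) : ℕ × ℕ) + (a,b) = (a+1,b+1) by ext <;> simp [Nat.add_comm]] at h3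
      rw [IsWeightedHomogeneous.weightedHomogeneousComponent_same hprod,
        IsWeightedHomogeneous.weightedHomogeneousComponent_same hmono']
    · have hne1 : ((a,b) : ℕ × ℕ) ≠ Finsupp.weight (ww D n) u := fun hc => hu hc.symm
      have hne2 : ((a+1,b+1) : ℕ × ℕ) ≠ (1,1) + Finsupp.weight (ww D n) u := by
        intro hcontra
        apply hu
        have h1 := congrArg Prod.fst hcontra
        have h2 := congrArg Prod.snd hcontra
        simp only [Prod.fst_add, Prod.snd_add] at h1 h2
        ext <;> simp at h1 h2 ⊢ <;> omega
      rw [IsWeightedHomogeneous.weightedHomogeneousComponent_ne _ hmono hne1, mul_zero,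
        IsWeightedHomogeneous.weightedHomogeneousComponent_ne _ (hp.mul hmono) hne2]

/-- extraction of bihomogeneous coefficients from ideal membership -/
lemma mem_span_homog {m : ℕ} (P : Fin m → MvPolynomial (σt D n) K)
    (hP : ∀ t, (P t).IsWeightedHomogeneous (ww D n) (1,1))
    (z : MvPolynomial (σt D n) K) (N : ℕ) (hN : 1 ≤ N)
    (hz : z.IsWeightedHomogeneous (ww D n) (N,N)) (hmem : z ∈ Ideal.span (Set.range P)) :
    ∃ h : Fin m → MvPolynomial (σt D n) K,
      (∀ t, h t ∈ Vw K D n (N-1,N-1)) ∧ z = ∑ t, h t * P t := by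
  classical
  obtain ⟨g, hg⟩ := Ideal.mem_span_range_iff_exists_fun.mp hmem
  refine ⟨fun t => weightedHomogeneousComponent (ww D n) (N-1,N-1) (g t), fun t =>
    weightedHomogeneousComponent_mem _ _ _, ?_⟩
  have hzc : z = weightedHomogeneousComponent (ww D n) (N,N) z :=
    (IsWeightedHomogeneous.weightedHomogeneousComponent_same hz).symm
  conv_lhs => rw [hzc, ← hg]
  rw [map_sum]
  apply Finset.sum_congr rfl
  intro t _
  rw [mul_comm (g t) (P t), show ((N,N) : ℕ × ℕ) = ((N-1)+1, (N-1)+1) by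
      ext <;> simp <;> omega,
    component_mul (P t) (hP t) (g t) (N-1) (N-1), mul_comm]

/-- In sufficiently high bidegree the ideal contains everything. -/
lemma endgame {m : ℕ} (P : Fin m → MvPolynomial (σt D n) K)
    (hP : ∀ t, (P t).IsWeightedHomogeneous (ww D n) (1,1))
    (q : ℕ → MvPolynomial (σt D n) K) (hqP : ∀ t : Fin m, q (t : ℕ) = P t)
    (N : ℕ) (hN : 1 ≤ N)
    (hNull : ∀ (a : Fin D) (b : Fin n),
      ((X (Sum.inl a) * X (Sum.inr b) : MvPolynomial (σt D n) K))^N ∈ Ideal.span (Set.range P))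
    (k : ℕ) (hk : N * (D + n) ≤ k) (hD : 1 ≤ D) (hn : 1 ≤ n) :
    Vw K D n (k,k) ≤ Wmod q m k := by
  classical
  have hk1 : 1 ≤ k := by nlinarith
  intro p hp
  have hrep := MvPolynomial.support_sum_monomial_coeff p
  rw [← hrep]
  apply Submodule.sum_mem
  intro d hd
  have hw : Finsupp.weight (ww D n) d = ((k,k) : ℕ × ℕ) := hp (MvPolynomial.mem_support_iff.mp hd)
  have hmono1 : (monomial d (coeff d p) : MvPolynomial (σt D n) K)
      = (coeff d p) • monomial d (1:K) := by
    rw [MvPolynomial.smul_monomial, smul_eq_mul, mul_one]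
  rw [hmono1]
  apply Submodule.smul_mem
  -- find big exponents
  have hcoords := weight_coords d
  rw [hw] at hcoords
  have hsum1 : ∑ a : Fin D, d (Sum.inl a) = k := by
    have := congrArg Prod.fst hcoords; simpa using this.symm
  have hsum2 : ∑ b : Fin n, d (Sum.inr b) = k := by
    have := congrArg Prod.snd hcoords; simpa using this.symm
  have hex1 : ∃ a : Fin D, N ≤ d (Sum.inl a) := by
    by_contra hcon
    push_neg at hcon
    have : ∑ a : Fin D, d (Sum.inl a) ≤ D * (N-1) := by
      calc ∑ a : Fin D, d (Sum.inl a) ≤ Finset.univ.card • (N-1) :=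
            Finset.sum_le_card_nsmul _ _ _ (fun a _ => by have := hcon a; omega)
        _ = D * (N-1) := by simp [smul_eq_mul]
      
    have hDk : D * (N - 1) < N * (D + n) := by
      have h1 : D * (N-1) + D = D * N := by
        rw [← Nat.mul_succ]; congr 1; omega
      have h2 : D * N ≤ N * (D + n) := by
        rw [mul_comm]
        exact Nat.mul_le_mul_left N (by omega)
      omega
    omega
  have hex2 : ∃ b : Fin n, N ≤ d (Sum.inr b) := by
    by_contra hcon
    push_neg at hcon
    have : ∑ b : Fin n, d (Sum.inr b) ≤ n * (N-1) := by
      calc ∑ b : Fin n, d (Sum.inr b) ≤ Finset.univ.card • (N-1) :=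
            Finset.sum_le_card_nsmul _ _ _ (fun b _ => by have := hcon b; omega)
        _ = n * (N-1) := by simp [smul_eq_mul]
    have hnk : n * (N - 1) < N * (D + n) := by
      have h1 : n * (N-1) + n = n * N := by
        rw [← Nat.mul_succ]; congr 1; omega
      have h2 : n * N ≤ N * (D + n) := by
        rw [mul_comm]
        exact Nat.mul_le_mul_left N (by omega)
      omega
    omega
  obtain ⟨a, ha⟩ := hex1
  obtain ⟨b, hb⟩ := hex2
  -- split the monomial
  set e : σt D n →₀ ℕ := Finsupp.single (Sum.inl a) N + Finsupp.single (Sum.inr b) N with he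
  have hle : e ≤ d := by
    rw [Finsupp.le_def]
    intro i
    rcases i with i | i
    · by_cases hia : i = a
      · subst hia
        simp [he, Finsupp.single_apply]
        omega
      · simp [he, Finsupp.single_apply, Ne.symm, hia]
    · by_cases hib : i = b
      · subst hib
        simp [he, Finsupp.single_apply]
        omega
      · simp [he, Finsupp.single_apply, Ne.symm, hib]
  set d' := d - e with hd'
  have hsplit : e + d' = d := add_tsub_cancel_of_le hle
  have hwe : Finsupp.weight (ww D n) e = ((N,N) : ℕ × ℕ) := by
    rw [he, map_add]
    have h1 : Finsupp.weight (ww D n) (Finsupp.single (Sum.inl a : σt D n) N) = N • ((1,0) : ℕ × ℕ) := by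
      rw [Finsupp.weight_apply, Finsupp.sum_single_index (by simp)]
      rfl
    have h2 : Finsupp.weight (ww D n) (Finsupp.single (Sum.inr b : σt D n) N) = N • ((0,1) : ℕ × ℕ) := by
      rw [Finsupp.weight_apply, Finsupp.sum_single_index (by simp)]
      rfl
    rw [h1, h2]
    ext <;> simp
  have hwd' : Finsupp.weight (ww D n) d' = ((k-N,k-N) : ℕ × ℕ) := by
    have := congrArg (Finsupp.weight (ww D n)) hsplit
    rw [map_add, hwe, hw] at this
    have h1 := congrArg Prod.fst this
    have h2 := congrArg Prod.snd this
    simp only [Prod.fst_add, Prod.snd_add] at h1 h2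
    have hNk : N ≤ k := by nlinarith
    ext <;> simp <;> omega
  -- the power polynomial
  have hXpow : ((X (Sum.inl a) * X (Sum.inr b) : MvPolynomial (σt D n) K))^N
      = monomial e (1:K) := by
    rw [mul_pow, MvPolynomial.X_pow_eq_monomial, MvPolynomial.X_pow_eq_monomial,
      MvPolynomial.monomial_mul, one_mul, he]
  have hXwh : (((X (Sum.inl a) * X (Sum.inr b) : MvPolynomial (σt D n) K))^N).IsWeightedHomogeneous
      (ww D n) ((N,N) : ℕ × ℕ) := by
    rw [hXpow]
    exact isWeightedHomogeneous_monomial _ _ _ hwe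
  obtain ⟨h, hhV, hform⟩ := mem_span_homog P hP _ N hN hXwh (hNull a b)
  -- final assembly
  have hfinal : (monomial d (1:K) : MvPolynomial (σt D n) K)
      = ∑ t : Fin m, (h t * monomial d' (1:K)) * P t := by
    have : (monomial d (1:K) : MvPolynomial (σt D n) K)
        = monomial e (1:K) * monomial d' (1:K) := by
      rw [MvPolynomial.monomial_mul, one_mul, hsplit]
    rw [this, ← hXpow, hform, Finset.sum_mul]
    apply Finset.sum_congr rfl
    intro t _
    ring
  rw [hfinal]
  apply Submodule.sum_mem
  intro t _
  have hmemV : h t * monomial d' (1:K) ∈ Vw K D n (k-1,k-1) := by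
    have := (hhV t).mul (isWeightedHomogeneous_monomial (ww D n) d' (1:K) hwd')
    rwa [show ((N-1,N-1) : ℕ × ℕ) + (k-N,k-N) = ((k-1,k-1) : ℕ × ℕ) by
      have hNk : N ≤ k := by nlinarith
      ext <;> simp <;> omega] at this
  have hterm : (h t * monomial d' (1:K)) * P t
      ∈ Submodule.map (LinearMap.mulLeft K (q (t : ℕ))) (Vw K D n (k-1,k-1)) := by
    refine ⟨h t * monomial d' (1:K), hmemV, ?_⟩
    rw [LinearMap.mulLeft_apply, hqP t, mul_comm]
  have hWm : Submodule.map (LinearMap.mulLeft K (q (t:ℕ))) (Vw K D n (k-1,k-1)) ≤ Wmod q m k := by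
    rw [show Wmod q m k = (Finset.range m).sup
      (fun c => Submodule.map (LinearMap.mulLeft K (q c)) (Vw K D n (k-1,k-1)))
      by unfold Wmod; rw [if_neg (by omega)]]
    exact Finset.le_sup (f := fun c => Submodule.map (LinearMap.mulLeft K (q c))
      (Vw K D n (k-1,k-1))) (Finset.mem_range.mpr t.isLt)
  exact hWm hterm

end Endgame


/-- partial sums -/
def psum (f : ℕ → ℕ) : ℕ → ℕ
  | 0 => f 0
  | (k+1) => psum f k + f (k+1)

/-- iterated partial sums: `pit (i+1) f = pit i (psum f)` -/
def pit : ℕ → (ℕ → ℕ) → (ℕ → ℕ)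
  | 0, f => f
  | (i+1), f => pit i (psum f)

lemma psum_mono {f g : ℕ → ℕ} (h : ∀ k, f k ≤ g k) : ∀ k, psum f k ≤ psum g k := by
  intro k; induction k with
  | zero => exact h 0
  | succ k ih => exact Nat.add_le_add ih (h (k+1))

lemma pit_mono {f g : ℕ → ℕ} (h : ∀ k, f k ≤ g k) : ∀ i k, pit i f k ≤ pit i g k := by
  intro i; induction i generalizing f g with
  | zero => exact h
  | succ i ih => exact ih (psum_mono h)

/-- Lemma A : if `F` dominates the difference of `G` then `psum F` dominates `G`. -/
lemma psum_ge_of_diff {F G : ℕ → ℕ} (h0 : G 0 ≤ F 0)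
    (h : ∀ k, G (k+1) ≤ F (k+1) + G k) : ∀ k, G k ≤ psum F k := by
  intro k; induction k with
  | zero => exact h0
  | succ k ih => calc G (k+1) ≤ F (k+1) + G k := h k
      _ ≤ F (k+1) + psum F k := by omega
      _ = psum F (k+1) := by simp [psum]; omega

lemma psum_le_const {f : ℕ → ℕ} {K0 : ℕ} (h : ∀ j, K0 ≤ j → f j = 0) :
    ∀ k, psum f k ≤ psum f K0 := by
  have mono : ∀ a b, a ≤ b → psum f a ≤ psum f b := by
    intro a b hab
    induction b with
    | zero => have : a = 0 := by omega
              simp [this]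
    | succ b ih =>
      rcases Nat.lt_or_ge a (b+1) with h1 | h1
      · exact le_trans (ih (by omega)) (by simp [psum])
      · have : a = b + 1 := by omega
        simp [this]
  intro k
  rcases Nat.lt_or_ge k K0 with h1 | h1
  · exact mono _ _ (by omega)
  · -- psum f k = psum f K0 for k ≥ K0
    clear mono
    induction k with
    | zero => have : K0 = 0 := by omega
              simp [this]
    | succ k ih =>
      rcases Nat.lt_or_ge k K0 with h2 | h2
      · have : K0 = k + 1 := by omega
        simp [this]
      · have := ih h2
        simp [psum, h (k+1) (by omega)]
        omega

lemma psum_le_pow {C t : ℕ} {f : ℕ → ℕ} (h : ∀ k, f k ≤ C * (k+1)^t) :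
    ∀ k, psum f k ≤ C * (k+1)^(t+1) := by
  intro k; induction k with
  | zero => simpa [psum] using h 0
  | succ k ih =>
    have h2 := h (k+1)
    have heq : psum f (k+1) = psum f k + f (k+1) := rfl
    have hp : C * (k+1)^(t+1) + C * (k+2)^t ≤ C * (k+2)^(t+1) := by
      have h3 : (k+1)^(t+1) + (k+2)^t ≤ (k+2)^(t+1) := by
        have h4 : (k+1)^(t+1) ≤ (k+1) * (k+2)^t := by
          have := Nat.pow_le_pow_left (show k+1 ≤ k+2 by omega) t
          calc (k+1)^(t+1) = (k+1) * (k+1)^t := by ring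
            _ ≤ (k+1) * (k+2)^t := Nat.mul_le_mul_left _ this
        calc (k+1)^(t+1) + (k+2)^t ≤ (k+1) * (k+2)^t + (k+2)^t := by omega
          _ = (k+2) * (k+2)^t := by ring
          _ = (k+2)^(t+1) := by ring
      calc C * (k+1)^(t+1) + C * (k+2)^t = C * ((k+1)^(t+1) + (k+2)^t) := by ring
        _ ≤ C * (k+2)^(t+1) := Nat.mul_le_mul_left _ h3
    calc psum f (k+1) = psum f k + f (k+1) := rfl
      _ ≤ C * (k+1)^(t+1) + C * (k+2)^t := by
          have h5 : (k+1)+1 = k+2 := rfl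
          rw [h5] at h2; omega
      _ ≤ C * (k+2)^(t+1) := hp
      _ = C * ((k+1)+1)^(t+1) := rfl

lemma pit_le_pow {C t : ℕ} {f : ℕ → ℕ} (h : ∀ k, f k ≤ C * (k+1)^t) :
    ∀ i k, pit i f k ≤ C * (k+1)^(t+i) := by
  intro i; induction i generalizing f t with
  | zero => simpa [pit] using h
  | succ i ih =>
    intro k
    have h6 := ih (psum_le_pow h) k
    have : pit (i+1) f k = pit i (psum f) k := rfl
    rw [this, show t + (i+1) = (t+1) + i by omega]
    exact h6

/-- The master chain lemma: given a family `H : ℕ → ℕ → ℕ` with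
`H (i+1) 0 ≥ H i 0` and `H i (k+1) ≤ H (i+1) (k+1) + H i k`, we get
`pit i (H i) ≥ H 0` pointwise. -/
lemma chain {H : ℕ → ℕ → ℕ} (h0 : ∀ i, H i 0 ≤ H (i+1) 0)
    (hstep : ∀ i k, H i (k+1) ≤ H (i+1) (k+1) + H i k) :
    ∀ i k, H 0 k ≤ pit i (H i) k := by
  intro i; induction i with
  | zero => intro k; exact le_refl _
  | succ i ih =>
    intro k
    have key : ∀ j, H i j ≤ psum (H (i+1)) j :=
      psum_ge_of_diff (h0 i) (fun k => hstep i k)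
    calc H 0 k ≤ pit i (H i) k := ih k
      _ ≤ pit i (psum (H (i+1))) k := pit_mono key i k
      _ = pit (i+1) (H (i+1)) k := rfl


noncomputable section Assemble

open MvPolynomial

theorem bilinear_exists {K : Type*} [Field K] [IsAlgClosed K] (D n m : ℕ)
    (hD : 1 ≤ D) (hn : 1 ≤ n) (hm : 1 ≤ m) (hbound : m + 2 ≤ D + n)
    (c : Fin D → Fin n → Fin m → K) :
    ∃ (x : Fin D → K) (y : Fin n → K), (∃ i, x i ≠ 0) ∧ (∃ j, y j ≠ 0) ∧
      ∀ t : Fin m, (∑ i : Fin D, ∑ j : Fin n, c i j t * x i * y j) = 0 := by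
  classical
  by_contra hcon
  push_neg at hcon
  -- from hcon: any common zero of the bilinear forms has x = 0 or y = 0
  have hzero : ∀ (x : Fin D → K) (y : Fin n → K),
      (∀ t : Fin m, (∑ i : Fin D, ∑ j : Fin n, c i j t * x i * y j) = 0) →
      (∀ i, x i = 0) ∨ (∀ j, y j = 0) := by
    intro x y hxy
    by_contra h2
    push_neg at h2
    obtain ⟨⟨i0, hi0⟩, ⟨j0, hj0⟩⟩ := h2
    obtain ⟨t, ht⟩ := hcon x y ⟨i0, hi0⟩ ⟨j0, hj0⟩
    exact ht (hxy t)
  -- the bilinear forms as polynomials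
  set P : Fin m → MvPolynomial (σt D n) K := fun t =>
    ∑ i : Fin D, ∑ j : Fin n, MvPolynomial.C (c i j t) * (X (Sum.inl i) * X (Sum.inr j)) with hPdef
  have hPH : ∀ t, (P t).IsWeightedHomogeneous (ww D n) ((1,1) : ℕ × ℕ) := by
    intro t
    apply IsWeightedHomogeneous.sum
    intro i _
    apply IsWeightedHomogeneous.sum
    intro j _
    have hX1 := isWeightedHomogeneous_X (R := K) (ww D n) (Sum.inl i : σt D n)
    have hX2 := isWeightedHomogeneous_X (R := K) (ww D n) (Sum.inr j : σt D n)
    have hC0 := isWeightedHomogeneous_C (σ := σt D n) (ww D n) (c i j t)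
    have h1 : (MvPolynomial.C (c i j t) * (X (Sum.inl i) * X (Sum.inr j))
        : MvPolynomial (σt D n) K).IsWeightedHomogeneous (ww D n)
        ((0 : ℕ × ℕ) + (ww D n (Sum.inl i) + ww D n (Sum.inr j))) :=
      hC0.mul (hX1.mul hX2)
    rwa [show ((0 : ℕ × ℕ) + (ww D n (Sum.inl i) + ww D n (Sum.inr j))) = ((1,1) : ℕ × ℕ) by
      simp [ww]] at h1
  have hevalP : ∀ (z : σt D n → K) (t : Fin m),
      MvPolynomial.eval z (P t) = ∑ i : Fin D, ∑ j : Fin n, c i j t * z (Sum.inl i) * z (Sum.inr j) := by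
    intro z t
    rw [hPdef]
    simp [mul_assoc]
  -- Nullstellensatz
  set I : Ideal (MvPolynomial (σt D n) K) := Ideal.span (Set.range P) with hIdef
  have hvan : ∀ (a : Fin D) (b : Fin n),
      (X (Sum.inl a) * X (Sum.inr b) : MvPolynomial (σt D n) K) ∈
        MvPolynomial.vanishingIdeal K (MvPolynomial.zeroLocus K I) := by
    intro a b
    rw [MvPolynomial.mem_vanishingIdeal_iff]
    intro z hz
    have hPz : ∀ t, MvPolynomial.eval z (P t) = 0 := fun t =>
      hz (P t) (Ideal.subset_span ⟨t, rfl⟩)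
    have := hzero (fun i => z (Sum.inl i)) (fun j => z (Sum.inr j)) (fun t => by
      rw [← hevalP z t]; exact hPz t)
    rcases this with h | h
    · simp [h a]
    · simp [h b]
  have hrad : ∀ (a : Fin D) (b : Fin n),
      (X (Sum.inl a) * X (Sum.inr b) : MvPolynomial (σt D n) K) ∈ I.radical := by
    intro a b
    rw [← MvPolynomial.vanishingIdeal_zeroLocus_eq_radical (K := K)]
    exact hvan a b
  have hpow : ∀ (ab : Fin D × Fin n), ∃ N : ℕ,
      ((X (Sum.inl ab.1) * X (Sum.inr ab.2) : MvPolynomial (σt D n) K))^N ∈ I := by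
    intro ab
    exact Ideal.mem_radical_iff.mp (hrad ab.1 ab.2)
  choose Nf hNf using hpow
  set N : ℕ := 1 + Finset.univ.sup Nf with hNdef
  have hN1 : 1 ≤ N := by omega
  have hNull : ∀ (a : Fin D) (b : Fin n),
      ((X (Sum.inl a) * X (Sum.inr b) : MvPolynomial (σt D n) K))^N ∈ I := by
    intro a b
    have hle : Nf (a, b) ≤ N := by
      have := Finset.le_sup (f := Nf) (Finset.mem_univ (a,b))
      omega
    have hsp := hNf (a, b)
    have heq2 : ((X (Sum.inl a) * X (Sum.inr b) : MvPolynomial (σt D n) K))^N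
        = ((X (Sum.inl a) * X (Sum.inr b)))^(N - Nf (a,b)) * ((X (Sum.inl a) * X (Sum.inr b)))^(Nf (a,b)) := by
      rw [← pow_add]; congr 1; omega
    rw [heq2]
    exact Ideal.mul_mem_left _ _ hsp
  -- the chain of ideal pieces
  set q : ℕ → MvPolynomial (σt D n) K := fun cc => if h : cc < m then P ⟨cc, h⟩ else 0 with hqdef
  have hq : ∀ cc, q cc ∈ Vw K D n (1,1) := by
    intro cc
    by_cases h : cc < m
    · have : q cc = P ⟨cc, h⟩ := by rw [hqdef]; exact dif_pos h
      rw [this]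
      exact hPH ⟨cc, h⟩
    · have : q cc = 0 := by rw [hqdef]; exact dif_neg h
      rw [this]
      exact Submodule.zero_mem _
  have hqP : ∀ t : Fin m, q (t : ℕ) = P t := by
    intro t
    have : q (t : ℕ) = P ⟨(t:ℕ), t.isLt⟩ := by rw [hqdef]; exact dif_pos t.isLt
    rw [this]
  set Hfun : ℕ → ℕ → ℕ := fun i k => dvF K D n k - hF q i k with hHdef
  have hfle : ∀ i k, hF q i k ≤ dvF K D n k := fun i k => hF_le_dv q hq i k
  have hH0 : ∀ k, Hfun 0 k = dvF K D n k := by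
    intro k
    rw [hHdef]
    simp only []
    rw [show hF q 0 k = 0 by unfold hF; rw [Wmod_zero q]; exact finrank_bot K _]
    omega
  have hchain0 : ∀ i, Hfun i 0 ≤ Hfun (i+1) 0 := by
    intro i
    have h1 : Wmod q i 0 = ⊥ := by unfold Wmod; rw [if_pos rfl]
    have h2 : Wmod q (i+1) 0 = ⊥ := by unfold Wmod; rw [if_pos rfl]
    rw [hHdef]
    simp only []
    unfold hF
    rw [h1, h2]
  have hchainstep : ∀ i k, Hfun i (k+1) ≤ Hfun (i+1) (k+1) + Hfun i k := by
    intro i k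
    have h1 := master q hq i k
    have h2 := hfle i k
    have h3 := hfle i (k+1)
    have h4 := hfle (i+1) (k+1)
    rw [hHdef]
    simp only []
    omega
  have hub : ∀ k, dvF K D n k ≤ pit m (Hfun m) k := by
    intro k
    have := chain hchain0 hchainstep m k
    rwa [hH0 k] at this
  -- endgame : Hfun m vanishes in high degrees
  set K0 : ℕ := N * (D + n) with hK0def
  have hvanish : ∀ j, K0 ≤ j → Hfun m j = 0 := by
    intro j hj
    have h1 : Vw K D n (j,j) ≤ Wmod q m j := endgame P hPH q hqP N hN1 hNull j hj hD hn
    have h2 : Wmod q m j ≤ Vw K D n (j,j) := Wmod_le q hq m j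
    have : Wmod q m j = Vw K D n (j,j) := le_antisymm h2 h1
    rw [hHdef]
    simp only []
    unfold hF dvF
    rw [this]
    omega
  -- upper bound for dv
  set G : ℕ → ℕ := Hfun m with hGdef
  set C : ℕ := psum G K0 with hCdef
  have hup2 : ∀ k, psum G k ≤ C * (k+1)^0 := by
    intro k
    have := psum_le_const hvanish k
    simpa using this
  have hub2 : ∀ k, dvF K D n k ≤ C * (k+1)^(m-1) := by
    intro k
    have h1 : pit m G k = pit (m-1) (psum G) k := by
      conv_lhs => rw [show m = (m-1)+1 by omega]
      rfl
    have h2 := pit_le_pow hup2 (m-1) k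
    have h3 := hub k
    rw [h1] at h3
    calc dvF K D n k ≤ pit (m-1) (psum G) k := h3
      _ ≤ C * (k+1)^(0 + (m-1)) := h2
      _ = C * (k+1)^(m-1) := by rw [Nat.zero_add]
  -- lower bound for dv
  set E : ℕ := D^(D-1) * n^(n-1) with hEdef
  have hlb : ∀ k, (k+1)^(D+n-2) ≤ E * dvF K D n k := by
    intro k
    have hdiv1 : k + 1 ≤ D * (k/D + 1) := by
      have h1 : D * (k/D + 1) = D * (k/D) + D := by ring
      have h2 := Nat.div_add_mod k D
      have h3 : k % D < D := Nat.mod_lt k (by omega)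
      omega
    have hdiv2 : k + 1 ≤ n * (k/n + 1) := by
      have h1 : n * (k/n + 1) = n * (k/n) + n := by ring
      have h2 := Nat.div_add_mod k n
      have h3 : k % n < n := Nat.mod_lt k (by omega)
      omega
    have hp1 : (k+1)^(D-1) ≤ D^(D-1) * (k/D + 1)^(D-1) := by
      calc (k+1)^(D-1) ≤ (D * (k/D + 1))^(D-1) := Nat.pow_le_pow_left hdiv1 _
        _ = D^(D-1) * (k/D + 1)^(D-1) := mul_pow _ _ _
    have hp2 : (k+1)^(n-1) ≤ n^(n-1) * (k/n + 1)^(n-1) := by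
      calc (k+1)^(n-1) ≤ (n * (k/n + 1))^(n-1) := Nat.pow_le_pow_left hdiv2 _
        _ = n^(n-1) * (k/n + 1)^(n-1) := mul_pow _ _ _
    have hcount := dv_lower hD hn k (K := K)
    calc (k+1)^(D+n-2) = (k+1)^(D-1) * (k+1)^(n-1) := by
          rw [← pow_add]; congr 1; omega
      _ ≤ (D^(D-1) * (k/D + 1)^(D-1)) * (n^(n-1) * (k/n + 1)^(n-1)) :=
          Nat.mul_le_mul hp1 hp2
      _ = E * ((k/D + 1)^(D-1) * (k/n + 1)^(n-1)) := by ring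
      _ ≤ E * dvF K D n k := Nat.mul_le_mul_left _ hcount
  -- final contradiction
  set k : ℕ := E * C with hkdef
  have hA : (k+1)^(D+n-2) ≤ E * (C * (k+1)^(m-1)) :=
    le_trans (hlb k) (Nat.mul_le_mul_left _ (hub2 k))
  have hB : (k+1)^m ≤ (k+1)^(D+n-2) := Nat.pow_le_pow_right (by omega) (by omega)
  have hC2 : (k+1)^m = (k+1)^(m-1) * (k+1) := by
    conv_lhs => rw [show m = (m-1)+1 by omega]
    rw [pow_succ]
  have hfin : (k+1)^(m-1) * (k+1) ≤ (k+1)^(m-1) * (E * C) := by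
    rw [← hC2]
    calc (k+1)^m ≤ E * (C * (k+1)^(m-1)) := le_trans hB hA
      _ = (k+1)^(m-1) * (E * C) := by ring
  have hcancel : k + 1 ≤ E * C :=
    Nat.le_of_mul_le_mul_left (by
      have h := hfin
      rwa [Nat.mul_comm ((k+1)^(m-1)) (k+1), Nat.mul_comm ((k+1)^(m-1)) (E*C)] at h)
      (Nat.pow_pos (by omega))
  omega

end Assemble

end Stmt8Aux

/-- Let `V`, `W` be finite-dimensional vector spaces over an algebraically closed field with
`dim V = r + 1 ≤ dim W = m`. Identifying tensors in `V ⊗ W` with linear maps (so that the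
rank of a tensor is the rank of the corresponding map), the locus `Z` of tensors of
non-maximal rank (rank `≤ r`) is Zariski-closed of codimension `m - r`; consequently any
linear subspace `X` meets `Z` in codimension at most `m - r` inside `X`. In particular, if
`dim X > m - r` then `X` contains a nonzero tensor of non-maximal rank. -/
theorem stmt_8 (K : Type*) [Field K] [IsAlgClosed K]
    (V W : Type*) [AddCommGroup V] [Module K V] [FiniteDimensional K V]
    [AddCommGroup W] [Module K W] [FiniteDimensional K W]
    (r m : ℕ) (hV : finrank K V = r + 1) (hW : finrank K W = m) (hrm : r + 1 ≤ m)
    (X : Submodule K (V →ₗ[K] W)) (hX : m - r < finrank K X) :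
    ∃ f ∈ X, f ≠ 0 ∧ finrank K (LinearMap.range f) ≤ r := by
  classical
  by_contra hcon
  push_neg at hcon
  set D := finrank K ↥X with hD
  have hDpos : 1 ≤ D := by omega
  let bX : Basis (Fin D) K ↥X := Module.finBasis K ↥X
  let bV : Basis (Fin (r+1)) K V := (Module.finBasis K V).reindex (finCongr hV)
  let bW : Basis (Fin m) K W := (Module.finBasis K W).reindex (finCongr hW)
  set c : Fin D → Fin (r+1) → Fin m → K :=
    fun i j t => bW.repr ((bX i : V →ₗ[K] W) (bV j)) t with hc
  obtain ⟨x, y, ⟨i0, hx0⟩, ⟨j0, hy0⟩, hsum⟩ :=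
    Stmt8Aux.bilinear_exists D (r+1) m hDpos (by omega) (by omega) (by omega) c
  set f0 : ↥X := ∑ i, x i • bX i with hf0
  set v : V := ∑ j, y j • bV j with hv
  -- the evaluation is zero
  have hcoord : ∀ t : Fin m, bW.repr ((f0 : V →ₗ[K] W) v) t
      = ∑ i : Fin D, ∑ j : Fin (r+1), c i j t * x i * y j := by
    intro t
    have h1 : (f0 : V →ₗ[K] W) = ∑ i, x i • (bX i : V →ₗ[K] W) := by
      rw [hf0]
      rw [show ((↑(∑ i : Fin D, x i • bX i) : V →ₗ[K] W)) = X.subtype (∑ i : Fin D, x i • bX i)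
        from rfl, map_sum]
      apply Finset.sum_congr rfl
      intro i _
      simp
    have h2 : (f0 : V →ₗ[K] W) v = ∑ i, ∑ j, (x i * y j) • ((bX i : V →ₗ[K] W) (bV j)) := by
      rw [h1, hv]
      rw [LinearMap.sum_apply]
      apply Finset.sum_congr rfl
      intro i _
      rw [LinearMap.smul_apply, map_sum]
      rw [Finset.smul_sum]
      apply Finset.sum_congr rfl
      intro j _
      rw [map_smul]
      rw [smul_smul]
    rw [h2, map_sum, Finsupp.finset_sum_apply]
    apply Finset.sum_congr rfl
    intro i _
    rw [map_sum, Finsupp.finset_sum_apply]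
    apply Finset.sum_congr rfl
    intro j _
    rw [map_smul, Finsupp.smul_apply, hc]
    simp [smul_eq_mul]
    ring
  have hfv : (f0 : V →ₗ[K] W) v = 0 := by
    have hrepr : bW.repr ((f0 : V →ₗ[K] W) v) = 0 := by
      ext t
      rw [Finsupp.coe_zero, Pi.zero_apply, hcoord t]
      exact hsum t
    exact (LinearEquiv.map_eq_zero_iff bW.repr).mp hrepr
  -- nonvanishing
  have hf0ne : f0 ≠ 0 := by
    intro h0
    apply hx0
    have hli := Fintype.linearIndependent_iff.mp bX.linearIndependent
    exact hli x (by rw [← hf0, h0]) i0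
  have hvne : v ≠ 0 := by
    intro h0
    apply hy0
    have hli := Fintype.linearIndependent_iff.mp bV.linearIndependent
    exact hli y (by rw [← hv, h0]) j0
  set f : V →ₗ[K] W := (f0 : V →ₗ[K] W) with hf
  have hfne : f ≠ 0 := by
    intro h0
    apply hf0ne
    exact Subtype.ext h0
  have hrank := hcon f f0.2 hfne
  -- rank-nullity contradiction
  have hvker : v ∈ LinearMap.ker f := by
    rw [LinearMap.mem_ker]
    exact hfv
  have hkerpos : 0 < finrank K (LinearMap.ker f) := by
    rw [Module.finrank_pos_iff]
    exact ⟨⟨⟨v, hvker⟩, 0, by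
      intro hcontra
      apply hvne
      exact congrArg Subtype.val hcontra⟩⟩
  have hrn := LinearMap.finrank_range_add_finrank_ker f
  rw [hV] at hrn
  omega
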